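/- Let k be a field of characteristic p > 2, s ≥ 1, n = p^s, and λ, μ ∈ k. Then the images of the generators a and b in the algebra H(λ,μ) lie in the Jacobson radical of H(λ,μ). -/

import Mathlib

open FreeAlgebra in
/-- The defining relations of the Hopf algebra `H(λ,μ)` of Cibils–Lauve–Witherspoon, on the
free algebra on three generators `g = ι 0`, `a = ι 1`, `b = ι 2`:
`g^n = 1`, `ag = ga`, `bg = ga + gb`, `a^p = λ(1-g^p)`, `b^p = μ(1-g^p)`,
`ba = ab + (1/2)a²`. -/
inductive HRel (k : Type*) [Field k] (n p : ℕ) (lam mu : k) :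
    FreeAlgebra k (Fin 3) → FreeAlgebra k (Fin 3) → Prop
  | gn : HRel k n p lam mu (ι k (0 : Fin 3) ^ n) 1
  | ag : HRel k n p lam mu (ι k (1 : Fin 3) * ι k (0 : Fin 3)) (ι k (0 : Fin 3) * ι k (1 : Fin 3))
  | bg : HRel k n p lam mu (ι k (2 : Fin 3) * ι k (0 : Fin 3))
      (ι k (0 : Fin 3) * ι k (1 : Fin 3) + ι k (0 : Fin 3) * ι k (2 : Fin 3))
  | ap : HRel k n p lam mu (ι k (1 : Fin 3) ^ p)
      (algebraMap k (FreeAlgebra k (Fin 3)) lam * (1 - ι k (0 : Fin 3) ^ p))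
  | bp : HRel k n p lam mu (ι k (2 : Fin 3) ^ p)
      (algebraMap k (FreeAlgebra k (Fin 3)) mu * (1 - ι k (0 : Fin 3) ^ p))
  | ba : HRel k n p lam mu (ι k (2 : Fin 3) * ι k (1 : Fin 3))
      (ι k (1 : Fin 3) * ι k (2 : Fin 3)
        + algebraMap k (FreeAlgebra k (Fin 3)) (1 / 2) * ι k (1 : Fin 3) ^ 2)

/-- The algebra `H(λ,μ)`: the quotient of the free algebra on `g, a, b` by the two-sided
ideal generated by the relations `HRel`. -/
abbrev HAlg (k : Type*) [Field k] (n p : ℕ) (lam mu : k) := RingQuot (HRel k n p lam mu)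

/-- The image of the generator `g` in `H(λ,μ)`. -/
noncomputable def Hg (k : Type*) [Field k] (n p : ℕ) (lam mu : k) : HAlg k n p lam mu :=
  RingQuot.mkAlgHom k (HRel k n p lam mu) (FreeAlgebra.ι k (0 : Fin 3))

/-- The image of the generator `a` in `H(λ,μ)`. -/
noncomputable def Ha (k : Type*) [Field k] (n p : ℕ) (lam mu : k) : HAlg k n p lam mu :=
  RingQuot.mkAlgHom k (HRel k n p lam mu) (FreeAlgebra.ι k (1 : Fin 3))

/-- The image of the generator `b` in `H(λ,μ)`. -/
noncomputable def Hb (k : Type*) [Field k] (n p : ℕ) (lam mu : k) : HAlg k n p lam mu :=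
  RingQuot.mkAlgHom k (HRel k n p lam mu) (FreeAlgebra.ι k (2 : Fin 3))

section Aux

variable {k : Type*} [Field k] {n p : ℕ} {lam mu : k}

local notation "H" => HAlg k n p lam mu
local notation "G" => Hg k n p lam mu
local notation "A" => Ha k n p lam mu
local notation "B" => Hb k n p lam mu
local notation "π" => RingQuot.mkAlgHom k (HRel k n p lam mu)

lemma rel_gn : G ^ n = (1 : H) := by
  have h := RingQuot.mkAlgHom_rel k (HRel.gn (k := k) (n := n) (p := p) (lam := lam) (mu := mu))
  simpa [Hg, map_pow] using h

lemma rel_ag : A * G = G * A := by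
  have h := RingQuot.mkAlgHom_rel k (HRel.ag (k := k) (n := n) (p := p) (lam := lam) (mu := mu))
  simpa [Ha, Hg, map_mul] using h

lemma rel_bg : B * G = G * A + G * B := by
  have h := RingQuot.mkAlgHom_rel k (HRel.bg (k := k) (n := n) (p := p) (lam := lam) (mu := mu))
  simpa [Ha, Hb, Hg, map_mul, map_add] using h

lemma rel_ap : A ^ p = algebraMap k H lam * (1 - G ^ p) := by
  have h := RingQuot.mkAlgHom_rel k (HRel.ap (k := k) (n := n) (p := p) (lam := lam) (mu := mu))
  simpa [Ha, Hg, map_pow, map_mul, map_sub, map_one] using h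

lemma rel_bp : B ^ p = algebraMap k H mu * (1 - G ^ p) := by
  have h := RingQuot.mkAlgHom_rel k (HRel.bp (k := k) (n := n) (p := p) (lam := lam) (mu := mu))
  simpa [Hb, Hg, map_pow, map_mul, map_sub, map_one] using h

lemma rel_ba : B * A = A * B + ((1 / 2 : k)) • (A * A) := by
  have h := RingQuot.mkAlgHom_rel k (HRel.ba (k := k) (n := n) (p := p) (lam := lam) (mu := mu))
  simp only [map_mul, map_add, map_pow, AlgHom.commutes] at h
  rw [Ha, Hb, h, Algebra.smul_def, pow_two]

/-- Moving `a` to the right across any element. -/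
lemma a_mul (x : H) : ∃ y : H, A * x = y * A := by
  obtain ⟨f, rfl⟩ := RingQuot.mkAlgHom_surjective k (HRel k n p lam mu) x
  refine FreeAlgebra.induction k (Fin 3) ?_ ?_ ?_ ?_ f
  · intro r
    exact ⟨algebraMap k H r, by rw [AlgHom.commutes, Algebra.commutes]⟩
  · intro i
    fin_cases i
    · exact ⟨G, rel_ag⟩
    · exact ⟨A, rfl⟩
    · refine ⟨B - (1 / 2 : k) • A, ?_⟩
      show A * B = (B - (1 / 2 : k) • A) * A
      rw [sub_mul, smul_mul_assoc, rel_ba]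
      abel
  · rintro u v ⟨y₁, h₁⟩ ⟨y₂, h₂⟩
    exact ⟨y₁ * y₂, by rw [map_mul, ← mul_assoc, h₁, mul_assoc, h₂, ← mul_assoc]⟩
  · rintro u v ⟨y₁, h₁⟩ ⟨y₂, h₂⟩
    exact ⟨y₁ + y₂, by rw [map_add, mul_add, h₁, h₂, add_mul]⟩

/-- Moving `b` to the right across any element. -/
lemma b_mul (x : H) : ∃ u v : H, B * x = u * A + v * B := by
  obtain ⟨f, rfl⟩ := RingQuot.mkAlgHom_surjective k (HRel k n p lam mu) x
  refine FreeAlgebra.induction k (Fin 3) ?_ ?_ ?_ ?_ f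
  · intro r
    refine ⟨0, algebraMap k H r, ?_⟩
    rw [AlgHom.commutes, zero_mul, zero_add, Algebra.commutes]
  · intro i
    fin_cases i
    · exact ⟨G, G, rel_bg⟩
    · refine ⟨(1 / 2 : k) • A, A, ?_⟩
      show B * A = (1 / 2 : k) • A * A + A * B
      rw [rel_ba, smul_mul_assoc, add_comm]
    · refine ⟨0, B, ?_⟩
      show B * B = 0 * A + B * B
      rw [zero_mul, zero_add]
  · rintro x y ⟨u₁, v₁, h₁⟩ ⟨u₂, v₂, h₂⟩
    obtain ⟨w, hw⟩ := a_mul (π y)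
    refine ⟨u₁ * w + v₁ * u₂, v₁ * v₂, ?_⟩
    calc B * (π (x * y)) = (B * π x) * π y := by rw [map_mul, mul_assoc]
      _ = u₁ * (A * π y) + v₁ * (B * π y) := by rw [h₁, add_mul, mul_assoc, mul_assoc]
      _ = u₁ * (w * A) + v₁ * (u₂ * A + v₂ * B) := by rw [hw, h₂]
      _ = (u₁ * w + v₁ * u₂) * A + (v₁ * v₂) * B := by noncomm_ring
  · rintro x y ⟨u₁, v₁, h₁⟩ ⟨u₂, v₂, h₂⟩
    refine ⟨u₁ + u₂, v₁ + v₂, ?_⟩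
    rw [map_add, mul_add, h₁, h₂]
    noncomm_ring

/-- Moving `b` across a power of `a`. -/
lemma b_mul_apow (j : ℕ) : ∃ c : k, B * A ^ j = A ^ j * B + c • A ^ (j + 1) := by
  induction j with
  | zero => exact ⟨0, by simp⟩
  | succ j ih =>
    obtain ⟨c, hc⟩ := ih
    refine ⟨(1 / 2 : k) + c, ?_⟩
    calc B * A ^ (j + 1) = (B * A ^ j) * A := by rw [pow_succ, ← mul_assoc]
      _ = (A ^ j * B) * A + c • (A ^ (j + 1) * A) := by rw [hc, add_mul, smul_mul_assoc]
      _ = A ^ j * (B * A) + c • A ^ (j + 1 + 1) := by rw [mul_assoc, ← pow_succ]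
      _ = A ^ j * (A * B) + (1 / 2 : k) • (A ^ j * (A * A)) + c • A ^ (j + 1 + 1) := by
          rw [rel_ba, mul_add, mul_smul_comm]
      _ = A ^ (j + 1) * B + ((1 / 2 : k) + c) • A ^ (j + 1 + 1) := by
          have h1 : A ^ j * (A * B) = A ^ (j + 1) * B := by rw [← mul_assoc, ← pow_succ]
          have h2 : A ^ j * (A * A) = A ^ (j + 1 + 1) := by
            rw [← mul_assoc, ← pow_succ, ← pow_succ]
          rw [add_smul, h1, h2, add_assoc]

/-- Moving a power of `a` to the right across any element. -/
lemma apow_mul (j : ℕ) : ∀ x : H, ∃ y : H, A ^ j * x = y * A ^ j := by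
  induction j with
  | zero => exact fun x => ⟨x, by simp⟩
  | succ j ih =>
    intro x
    obtain ⟨y, hy⟩ := a_mul x
    obtain ⟨z, hz⟩ := ih y
    refine ⟨z, ?_⟩
    calc A ^ (j + 1) * x = A ^ j * (A * x) := by rw [pow_succ, mul_assoc]
      _ = (A ^ j * y) * A := by rw [hy, ← mul_assoc]
      _ = (z * A ^ j) * A := by rw [hz]
      _ = z * A ^ (j + 1) := by rw [mul_assoc, ← pow_succ]

end Aux

/-- The `k`-span of elements `y * a^j * b^l` with `j + l = m`. -/
noncomputable def NF (k : Type*) [Field k] (n p : ℕ) (lam mu : k) (m : ℕ) :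
    Submodule k (HAlg k n p lam mu) :=
  Submodule.span k {x | ∃ (y : HAlg k n p lam mu) (j l : ℕ), j + l = m ∧
    x = y * Ha k n p lam mu ^ j * Hb k n p lam mu ^ l}

/-- The `k`-span of pure monomials `a^j * b^l` with `j + l = m`. -/
noncomputable def NFp (k : Type*) [Field k] (n p : ℕ) (lam mu : k) (m : ℕ) :
    Submodule k (HAlg k n p lam mu) :=
  Submodule.span k {x | ∃ (j l : ℕ), j + l = m ∧
    x = Ha k n p lam mu ^ j * Hb k n p lam mu ^ l}

section Aux2

variable {k : Type*} [Field k] {n p : ℕ} {lam mu : k}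

local notation "H" => HAlg k n p lam mu
local notation "G" => Hg k n p lam mu
local notation "A" => Ha k n p lam mu
local notation "B" => Hb k n p lam mu

lemma gen_mem_NF (y : H) (j l m : ℕ) (h : j + l = m) : y * A ^ j * B ^ l ∈ NF k n p lam mu m :=
  Submodule.subset_span ⟨y, j, l, h, rfl⟩

lemma gen_mem_NFp (j l m : ℕ) (h : j + l = m) : A ^ j * B ^ l ∈ NFp k n p lam mu m :=
  Submodule.subset_span ⟨j, l, h, rfl⟩

lemma b_mul_mem_NFp {m : ℕ} {w : H} (hw : w ∈ NFp k n p lam mu m) :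
    B * w ∈ NFp k n p lam mu (m + 1) := by
  induction hw using Submodule.span_induction with
  | mem x hx =>
    obtain ⟨j, l, hjl, rfl⟩ := hx
    obtain ⟨c, hc⟩ := b_mul_apow (n := n) (p := p) (lam := lam) (mu := mu) j
    have key : B * (A ^ j * B ^ l) = A ^ j * B ^ (l + 1) + c • (A ^ (j + 1) * B ^ l) := by
      calc B * (A ^ j * B ^ l) = (B * A ^ j) * B ^ l := by rw [mul_assoc]
        _ = A ^ j * (B * B ^ l) + c • (A ^ (j + 1) * B ^ l) := by
            rw [hc, add_mul, smul_mul_assoc, mul_assoc]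
        _ = A ^ j * B ^ (l + 1) + c • (A ^ (j + 1) * B ^ l) := by rw [← pow_succ']
    rw [key]
    exact Submodule.add_mem _ (gen_mem_NFp j (l + 1) _ (by omega))
      (Submodule.smul_mem _ _ (gen_mem_NFp (j + 1) l _ (by omega)))
  | zero => rw [mul_zero]; exact Submodule.zero_mem _
  | add x y hx hy ihx ihy => rw [mul_add]; exact Submodule.add_mem _ ihx ihy
  | smul c x hx ihx => rw [mul_smul_comm]; exact Submodule.smul_mem _ _ ihx

lemma bpow_mul_a (i : ℕ) : B ^ i * A ∈ NFp k n p lam mu (i + 1) := by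
  induction i with
  | zero =>
    have h : (B : H) ^ 0 * A = A ^ 1 * B ^ 0 := by simp
    rw [h]
    exact gen_mem_NFp 1 0 1 rfl
  | succ i ih =>
    have h : B ^ (i + 1) * A = B * (B ^ i * A) := by rw [pow_succ', mul_assoc]
    rw [h]
    exact b_mul_mem_NFp ih

lemma b_mul_mem_NF {m : ℕ} {w : H} (hw : w ∈ NF k n p lam mu m) :
    B * w ∈ NF k n p lam mu (m + 1) := by
  induction hw using Submodule.span_induction with
  | mem w hw =>
    obtain ⟨y, j, i, hji, rfl⟩ := hw
    obtain ⟨u, v, huv⟩ := b_mul (n := n) (p := p) (lam := lam) (mu := mu) y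
    obtain ⟨c, hc⟩ := b_mul_apow (n := n) (p := p) (lam := lam) (mu := mu) j
    have key : B * (y * A ^ j * B ^ i)
        = u * A ^ (j + 1) * B ^ i + (v * A ^ j * B ^ (i + 1)
          + c • (v * A ^ (j + 1) * B ^ i)) := by
      calc B * (y * A ^ j * B ^ i) = ((B * y) * A ^ j) * B ^ i := by
            rw [← mul_assoc, ← mul_assoc]
        _ = ((u * A + v * B) * A ^ j) * B ^ i := by rw [huv]
        _ = (u * (A * A ^ j)) * B ^ i + (v * (B * A ^ j)) * B ^ i := by
            rw [add_mul, add_mul, mul_assoc u, mul_assoc v]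
        _ = (u * A ^ (j + 1)) * B ^ i
            + (v * (A ^ j * B + c • A ^ (j + 1))) * B ^ i := by rw [← pow_succ', hc]
        _ = u * A ^ (j + 1) * B ^ i + (v * A ^ j * B ^ (i + 1)
            + c • (v * A ^ (j + 1) * B ^ i)) := by
            rw [mul_add, add_mul, mul_smul_comm, smul_mul_assoc,
              mul_assoc v (Ha k n p lam mu ^ j * Hb k n p lam mu),
              mul_assoc (Ha k n p lam mu ^ j), ← pow_succ',
              ← mul_assoc v (Ha k n p lam mu ^ j)]
    rw [key]
    exact Submodule.add_mem _ (gen_mem_NF u (j + 1) i _ (by omega))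
      (Submodule.add_mem _ (gen_mem_NF v j (i + 1) _ (by omega))
        (Submodule.smul_mem _ _ (gen_mem_NF v (j + 1) i _ (by omega))))
  | zero => rw [mul_zero]; exact Submodule.zero_mem _
  | add w₁ w₂ hw₁ hw₂ ih₁ ih₂ => rw [mul_add]; exact Submodule.add_mem _ ih₁ ih₂
  | smul c w hw ihw => rw [mul_smul_comm]; exact Submodule.smul_mem _ _ ihw

lemma bpow_mul_mem_NF (l : ℕ) (x : H) : B ^ l * x ∈ NF k n p lam mu l := by
  induction l with
  | zero => simpa using gen_mem_NF x 0 0 0 rfl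
  | succ l ih =>
    have h : B ^ (l + 1) * x = B * (B ^ l * x) := by rw [pow_succ', mul_assoc]
    rw [h]
    exact b_mul_mem_NF ih

lemma mul_apow_NF_mem {i : ℕ} {t : H} (ht : t ∈ NF k n p lam mu i) (y : H) (j : ℕ) :
    y * (A ^ j * t) ∈ NF k n p lam mu (j + i) := by
  induction ht using Submodule.span_induction with
  | mem t ht =>
    obtain ⟨z, j', i', hji', rfl⟩ := ht
    obtain ⟨z', hz'⟩ := apow_mul (n := n) (p := p) (lam := lam) (mu := mu) j z
    have key : y * (A ^ j * (z * A ^ j' * B ^ i')) = (y * z') * A ^ (j + j') * B ^ i' := by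
      have h1 : A ^ j * (z * A ^ j' * B ^ i') = (A ^ j * z) * (A ^ j' * B ^ i') := by
        noncomm_ring
      rw [h1, hz', pow_add]
      noncomm_ring
    rw [key]
    exact gen_mem_NF (y * z') (j + j') i' _ (by omega)
  | zero => rw [mul_zero, mul_zero]; exact Submodule.zero_mem _
  | add t₁ t₂ ht₁ ht₂ ih₁ ih₂ =>
    rw [mul_add, mul_add]; exact Submodule.add_mem _ ih₁ ih₂
  | smul c t ht iht =>
    rw [mul_smul_comm, mul_smul_comm]; exact Submodule.smul_mem _ _ iht

/-- `NF m` absorbs arbitrary right multiplication. -/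
lemma NF_mul_mem {m : ℕ} {w : H} (hw : w ∈ NF k n p lam mu m) (x : H) :
    w * x ∈ NF k n p lam mu m := by
  induction hw using Submodule.span_induction with
  | mem w hw =>
    obtain ⟨y, j, i, hji, rfl⟩ := hw
    have h1 : y * A ^ j * B ^ i * x = y * (A ^ j * (B ^ i * x)) := by
      rw [mul_assoc, mul_assoc]
    rw [h1]
    have h2 := mul_apow_NF_mem (bpow_mul_mem_NF i x) y j
    rwa [hji] at h2
  | zero => rw [zero_mul]; exact Submodule.zero_mem _
  | add w₁ w₂ hw₁ hw₂ ih₁ ih₂ => rw [add_mul]; exact Submodule.add_mem _ ih₁ ih₂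
  | smul c w hw ihw => rw [smul_mul_assoc]; exact Submodule.smul_mem _ _ ihw

lemma NF_mul_b_mem {m : ℕ} {w : H} (hw : w ∈ NF k n p lam mu m) :
    w * B ∈ NF k n p lam mu (m + 1) := by
  induction hw using Submodule.span_induction with
  | mem w hw =>
    obtain ⟨y, j, i, hji, rfl⟩ := hw
    have h : y * A ^ j * B ^ i * B = y * A ^ j * B ^ (i + 1) := by
      rw [mul_assoc, ← pow_succ]
    rw [h]
    exact gen_mem_NF y j (i + 1) _ (by omega)
  | zero => rw [zero_mul]; exact Submodule.zero_mem _
  | add w₁ w₂ hw₁ hw₂ ih₁ ih₂ => rw [add_mul]; exact Submodule.add_mem _ ih₁ ih₂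
  | smul c w hw ihw => rw [smul_mul_assoc]; exact Submodule.smul_mem _ _ ihw

lemma NFp_mul_NF {m' : ℕ} {t : H} (ht : t ∈ NFp k n p lam mu m') (y : H) (j : ℕ) :
    (y * A ^ j) * t ∈ NF k n p lam mu (j + m') := by
  induction ht using Submodule.span_induction with
  | mem t ht =>
    obtain ⟨j', i', hji', rfl⟩ := ht
    have key : (y * A ^ j) * (A ^ j' * B ^ i') = y * A ^ (j + j') * B ^ i' := by
      rw [pow_add]
      noncomm_ring
    rw [key]
    exact gen_mem_NF y (j + j') i' _ (by omega)
  | zero => rw [mul_zero]; exact Submodule.zero_mem _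
  | add t₁ t₂ ht₁ ht₂ ih₁ ih₂ => rw [mul_add]; exact Submodule.add_mem _ ih₁ ih₂
  | smul c t ht iht => rw [mul_smul_comm]; exact Submodule.smul_mem _ _ iht

lemma NF_mul_a_mem {m : ℕ} {w : H} (hw : w ∈ NF k n p lam mu m) :
    w * A ∈ NF k n p lam mu (m + 1) := by
  induction hw using Submodule.span_induction with
  | mem w hw =>
    obtain ⟨y, j, i, hji, rfl⟩ := hw
    have h : y * A ^ j * B ^ i * A = (y * A ^ j) * (B ^ i * A) := by
      rw [mul_assoc]
    rw [h]
    have h2 := NFp_mul_NF (bpow_mul_a i) y j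
    rwa [show j + (i + 1) = m + 1 by omega] at h2
  | zero => rw [zero_mul]; exact Submodule.zero_mem _
  | add w₁ w₂ hw₁ hw₂ ih₁ ih₂ => rw [add_mul]; exact Submodule.add_mem _ ih₁ ih₂
  | smul c w hw ihw => rw [smul_mul_assoc]; exact Submodule.smul_mem _ _ ihw

lemma pow_mem_NF (y c : H) (hc : c = A ∨ c = B) (m : ℕ) :
    (y * c) ^ m ∈ NF k n p lam mu m := by
  induction m with
  | zero => simpa using gen_mem_NF 1 0 0 0 rfl
  | succ m ih =>
    rw [pow_succ, ← mul_assoc]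
    have h1 : (y * c) ^ m * y ∈ NF k n p lam mu m := NF_mul_mem ih y
    rcases hc with rfl | rfl
    · exact NF_mul_a_mem h1
    · exact NF_mul_b_mem h1

end Aux2

/-- For `k` of characteristic `p > 2` and `n = p^s` with `s ≥ 1`, the
images of the generators `a` and `b` in `H(λ,μ)` lie in the Jacobson radical. -/
theorem stmt6 {k : Type*} [Field k] (p : ℕ) [CharP k p] (hp : 2 < p)
    (s : ℕ) (hs : 1 ≤ s) (lam mu : k) :
    Ha k (p ^ s) p lam mu ∈ (⊥ : Ideal (HAlg k (p ^ s) p lam mu)).jacobson ∧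
    Hb k (p ^ s) p lam mu ∈ (⊥ : Ideal (HAlg k (p ^ s) p lam mu)).jacobson := by
  rcases subsingleton_or_nontrivial (HAlg k (p ^ s) p lam mu) with hH | hH
  · refine ⟨?_, ?_⟩
    · rw [Subsingleton.elim (Ha k (p ^ s) p lam mu) 0]
      exact Submodule.zero_mem _
    · rw [Subsingleton.elim (Hb k (p ^ s) p lam mu) 0]
      exact Submodule.zero_mem _
  have hprime : p.Prime := by
    rcases CharP.char_is_prime_or_zero k p with h | h
    · exact h
    · omega
  haveI : Fact p.Prime := ⟨hprime⟩
  haveI : CharP (HAlg k (p ^ s) p lam mu) p := charP_of_injective_algebraMap' k p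
  have hps : p * p ^ (s - 1) = p ^ s := by
    conv_rhs => rw [show s = 1 + (s - 1) by omega]
    rw [pow_add, pow_one]
  have hgs : ((1 : HAlg k (p ^ s) p lam mu) - Hg k (p ^ s) p lam mu ^ p) ^ p ^ (s - 1)
      = 0 := by
    rw [sub_pow_char_pow_of_commute p (s - 1) (Commute.one_left _), one_pow, ← pow_mul, hps,
      rel_gn, sub_self]
  have hcomm : ∀ c : k, ((algebraMap k (HAlg k (p ^ s) p lam mu) c)
      * (1 - Hg k (p ^ s) p lam mu ^ p)) ^ p ^ (s - 1) = 0 := by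
    intro c
    rw [(Algebra.commute_algebraMap_left c
      ((1 : HAlg k (p ^ s) p lam mu) - Hg k (p ^ s) p lam mu ^ p)).mul_pow, hgs, mul_zero]
  have hApow : Ha k (p ^ s) p lam mu ^ p ^ s = 0 := by
    have h : Ha k (p ^ s) p lam mu ^ p ^ s
        = (Ha k (p ^ s) p lam mu ^ p) ^ p ^ (s - 1) := by
      rw [← pow_mul, hps]
    rw [h, rel_ap]
    exact hcomm lam
  have hBpow : Hb k (p ^ s) p lam mu ^ p ^ s = 0 := by
    have h : Hb k (p ^ s) p lam mu ^ p ^ s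
        = (Hb k (p ^ s) p lam mu ^ p) ^ p ^ (s - 1) := by
      rw [← pow_mul, hps]
    rw [h, rel_bp]
    exact hcomm mu
  -- every element of `NF (p^s + p^s)` vanishes
  have hNF : ∀ x ∈ NF k (p ^ s) p lam mu (p ^ s + p ^ s), x = (0 : HAlg k (p ^ s) p lam mu) := by
    intro x hx
    have hle : NF k (p ^ s) p lam mu (p ^ s + p ^ s) ≤ ⊥ := by
      rw [NF, Submodule.span_le]
      rintro z ⟨y, j, l, hjl, rfl⟩
      simp only [SetLike.mem_coe, Submodule.mem_bot]
      rcases le_or_gt (p ^ s) j with hj | hj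
      · have hz : Ha k (p ^ s) p lam mu ^ j = 0 := by
          rw [show j = p ^ s + (j - p ^ s) by omega, pow_add, hApow, zero_mul]
        rw [hz, mul_zero, zero_mul]
      · have hl : p ^ s ≤ l := by omega
        have hz : Hb k (p ^ s) p lam mu ^ l = 0 := by
          rw [show l = p ^ s + (l - p ^ s) by omega, pow_add, hBpow, zero_mul]
        rw [hz, mul_zero]
    simpa using hle hx
  have hnil : ∀ (y c : HAlg k (p ^ s) p lam mu),
      (c = Ha k (p ^ s) p lam mu ∨ c = Hb k (p ^ s) p lam mu) → IsNilpotent (y * c) := by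
    intro y c hc
    exact ⟨p ^ s + p ^ s, hNF _ (pow_mem_NF y c hc (p ^ s + p ^ s))⟩
  have main : ∀ c : HAlg k (p ^ s) p lam mu,
      (c = Ha k (p ^ s) p lam mu ∨ c = Hb k (p ^ s) p lam mu) →
      c ∈ (⊥ : Ideal (HAlg k (p ^ s) p lam mu)).jacobson := by
    intro c hc
    rw [Ideal.mem_jacobson_iff]
    intro y
    have hu : IsUnit ((1 : HAlg k (p ^ s) p lam mu) + y * c) := by
      have h := (hnil y c hc).neg.isUnit_one_sub
      rwa [sub_neg_eq_add] at h
    obtain ⟨u, hu⟩ := hu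
    refine ⟨↑u⁻¹, ?_⟩
    have h1 : (↑u⁻¹ : HAlg k (p ^ s) p lam mu) * (1 + y * c) = 1 := by
      rw [← hu]; exact u.inv_mul
    have h2 : (↑u⁻¹ : HAlg k (p ^ s) p lam mu) * y * c + ↑u⁻¹
        = ↑u⁻¹ * (1 + y * c) := by noncomm_ring
    rw [Ideal.mem_bot, h2, h1, sub_self]
  exact ⟨main _ (Or.inl rfl), main _ (Or.inr rfl)⟩
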